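/- Let n be a natural number, V a finite-dimensional complex inner product space, σ : V → V a conjugate-linear involution with ⟪σ v, σ w⟫ = conj ⟪v, w⟫, and (e₁, …, e_N) an ℝ-basis of Fix(σ) orthonormal for the restricted inner product. Then for any v ∈ V, ‖∑ i, ⟪e_i, v⟫^2‖ ≤ ‖v‖², with equality if v ∈ Fix(σ); in particular the restriction of the complexified quadratic form v ↦ ∑ ⟪e_i, v⟫² to Fix(σ) equals the (real) squared norm: for v ∈ Fix(σ), ∑ i, ⟪e_i, v⟫^2 = (‖v‖² : ℂ). -/
import Mathlib


open scoped InnerProductSpace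

/-- For any `v ∈ V`, `‖∑ᵢ ⟪eᵢ, v⟫²‖ ≤ ‖v‖²`, with equality if `v` lies in the real form
`Fix(σ)`; moreover on `Fix(σ)` the complexified quadratic form `∑ᵢ ⟪eᵢ, v⟫²` equals the
squared norm `‖v‖²`. -/
theorem sum_inner_sq_restricts_to_norm_sq {V : Type*} [NormedAddCommGroup V]
    [InnerProductSpace ℂ V] [FiniteDimensional ℂ V]
    (σ : V → V)
    (hadd : ∀ v w : V, σ (v + w) = σ v + σ w)
    (hsmul : ∀ (c : ℂ) (v : V), σ (c • v) = (starRingEnd ℂ c) • σ v)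
    (hinv : σ ∘ σ = id)
    (hinner : ∀ v w : V, ⟪σ v, σ w⟫_ℂ = (starRingEnd ℂ) ⟪v, w⟫_ℂ)
    (N : ℕ) (e : Fin N → V)
    (hfix : ∀ i, σ (e i) = e i)
    (hindep : LinearIndependent ℝ e)
    (hspan : ∀ v : V, σ v = v → ∃ c : Fin N → ℝ, v = ∑ i, c i • e i)
    (hortho : ∀ i j, (⟪e i, e j⟫_ℂ).re = if i = j then 1 else 0) :
    ∀ v : V, ‖∑ i, ⟪e i, v⟫_ℂ ^ 2‖ ≤ ‖v‖ ^ 2 ∧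
      (σ v = v → ‖∑ i, ⟪e i, v⟫_ℂ ^ 2‖ = ‖v‖ ^ 2) ∧
      (σ v = v → ∑ i, ⟪e i, v⟫_ℂ ^ 2 = ((‖v‖ ^ 2 : ℝ) : ℂ)) := by
  have hreal : ∀ i j, ⟪e i, e j⟫_ℂ = if i = j then 1 else 0 := by
    intro i j
    have h1 : ⟪e i, e j⟫_ℂ = (starRingEnd ℂ) ⟪e i, e j⟫_ℂ := by
      conv_lhs => rw [← hfix i, ← hfix j, hinner]
    have him : (⟪e i, e j⟫_ℂ).im = 0 := by
      have := congrArg Complex.im h1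
      rw [Complex.conj_im] at this
      linarith
    apply Complex.ext
    · rw [hortho i j]; split <;> simp
    · rw [him]; split <;> simp
  have hon : Orthonormal ℂ e := orthonormal_iff_ite.mpr hreal
  intro v
  have hineq : ‖∑ i, ⟪e i, v⟫_ℂ ^ 2‖ ≤ ‖v‖ ^ 2 := by
    calc ‖∑ i, ⟪e i, v⟫_ℂ ^ 2‖ ≤ ∑ i, ‖⟪e i, v⟫_ℂ ^ 2‖ := norm_sum_le _ _
    _ = ∑ i, ‖⟪e i, v⟫_ℂ‖ ^ 2 := by simp [norm_pow]
    _ ≤ ‖v‖ ^ 2 := by simpa using hon.sum_inner_products_le v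
  have heq : σ v = v → ∑ i, ⟪e i, v⟫_ℂ ^ 2 = ((‖v‖ ^ 2 : ℝ) : ℂ) := by
    intro hv
    obtain ⟨c, rfl⟩ := hspan v hv
    have hcoe : ∀ i, c i • e i = ((c i : ℂ)) • e i := fun i =>
      (algebraMap_smul ℂ (c i) (e i)).symm
    have hcj : ∀ j, ⟪e j, ∑ i, c i • e i⟫_ℂ = (c j : ℂ) := by
      intro j
      rw [inner_sum]
      rw [Finset.sum_eq_single j]
      · rw [hcoe j, inner_smul_right, hreal j j]; simp
      · intro i _ hij
        rw [hcoe i, inner_smul_right, hreal j i]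
        simp [Ne.symm hij]
      · simp
    have hvv : ⟪∑ i, c i • e i, ∑ i, c i • e i⟫_ℂ = ((∑ i, (c i) ^ 2 : ℝ) : ℂ) := by
      rw [sum_inner]
      push_cast
      refine Finset.sum_congr rfl fun j _ => ?_
      rw [hcoe j, inner_smul_left, hcj j]
      simp [Complex.conj_ofReal]
      ring
    have hnorm : ‖∑ i, c i • e i‖ ^ 2 = ∑ i, (c i) ^ 2 := by
      rw [← inner_self_eq_norm_sq (𝕜 := ℂ), hvv]
      exact Complex.ofReal_re _
    rw [hnorm]
    simp only [hcj]
    push_cast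
    ring
  refine ⟨hineq, fun hv => ?_, heq⟩
  rw [heq hv]
  rw [Complex.norm_real]
  exact abs_of_nonneg (by positivity)
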